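/- Let H be an infinite-dimensional separable complex Hilbert space, let W be a symmetric countably syndetic subset of U(H), and suppose H decomposes as an orthogonal direct sum H = ⊕ₙ Kₙ of infinite-dimensional closed subspaces Kₙ. Then there exists n such that W² is full for Kₙ, i.e., for every unitary operator u on Kₙ there exists v ∈ W² leaving Kₙ invariant with v|_{Kₙ} = u. -/

import Mathlib

open Pointwise

noncomputable section AuxLp

variable {ι : Type*} {G : ι → Type*} [∀ i, NormedAddCommGroup (G i)]
  [∀ i, InnerProductSpace ℂ (G i)]

theorem memℓp_comp_isometryEquiv (w : ∀ i, G i ≃ₗᵢ[ℂ] G i) {f : ∀ i, G i}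
    (hf : Memℓp f 2) : Memℓp (fun i => w i (f i)) 2 := by
  apply memℓp_gen
  have := hf.summable (by norm_num)
  simpa using this

/-- The "diagonal" linear isometry equivalence of `lp G 2` induced by a family of
linear isometry equivalences of the components. -/
def lpCongr (w : ∀ i, G i ≃ₗᵢ[ℂ] G i) : lp G 2 ≃ₗᵢ[ℂ] lp G 2 where
  toFun f := ⟨fun i => w i (f i), memℓp_comp_isometryEquiv w (lp.memℓp f)⟩
  invFun f := ⟨fun i => (w i).symm (f i),
    memℓp_comp_isometryEquiv (fun i => (w i).symm) (lp.memℓp f)⟩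
  left_inv f := by ext i; simp
  right_inv f := by ext i; simp
  map_add' f g := by ext i; simp; rfl
  map_smul' c f := by ext i; simp
  norm_map' f := by
    have h2 : (0:ℝ) < (2 : ENNReal).toReal := by norm_num
    rw [lp.norm_eq_tsum_rpow h2, lp.norm_eq_tsum_rpow h2 f]
    congr 1
    apply tsum_congr
    intro i
    simp

theorem lpCongr_apply (w : ∀ i, G i ≃ₗᵢ[ℂ] G i) (f : lp G 2) (i : ι) :
    (lpCongr w f : ∀ i, G i) i = w i (f i) := rfl

theorem lpCongr_single [DecidableEq ι] (w : ∀ i, G i ≃ₗᵢ[ℂ] G i) (i : ι) (x : G i) :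
    lpCongr w (lp.single 2 i x) = lp.single 2 i (w i x) := by
  ext j
  rw [lpCongr_apply]
  rcases eq_or_ne j i with rfl | hj
  · rw [lp.single_apply_self, lp.single_apply_self]
  · rw [lp.single_apply_ne _ _ _ hj, lp.single_apply_ne _ _ _ hj, map_zero]

end AuxLp

/-- Let `H` be an infinite-dimensional separable complex Hilbert space, `W` a symmetric
countably syndetic subset of `U(H)`, and `H = ⊕ₙ Kₙ` an orthogonal decomposition of `H`
into infinite-dimensional closed subspaces. Then there is an `n` such that `W ^ 2` is full
for `Kₙ`: every unitary of `Kₙ` is the restriction to `Kₙ` of some element of `W ^ 2`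
leaving `Kₙ` invariant. -/
theorem exists_full_subspace
    {H : Type*} [NormedAddCommGroup H] [InnerProductSpace ℂ H] [CompleteSpace H]
    [TopologicalSpace.SeparableSpace H] (hinf : ¬ FiniteDimensional ℂ H)
    (W : Set (H ≃ₗᵢ[ℂ] H)) (hsym : W⁻¹ = W)
    (hsynd : ∃ s : ℕ → (H ≃ₗᵢ[ℂ] H), ∀ g : (H ≃ₗᵢ[ℂ] H), ∃ n : ℕ, g ∈ s n • W)
    (K : ℕ → Submodule ℂ H)
    (hclosed : ∀ n, IsClosed ((K n) : Set H))
    (hKinf : ∀ n, ¬ FiniteDimensional ℂ (K n))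
    (horth : ∀ m n, m ≠ n → ∀ x ∈ K m, ∀ y ∈ K n, (inner ℂ x y : ℂ) = 0)
    (hdense : (⨆ n, K n).topologicalClosure = ⊤) :
    ∃ n : ℕ, ∀ u : (K n) ≃ₗᵢ[ℂ] (K n), ∃ v ∈ W ^ 2,
      (K n).map (v.toLinearEquiv : H →ₗ[ℂ] H) = K n ∧
      ∀ x : K n, v (x : H) = (u x : H) := by
  classical
  by_contra hcon
  push_neg at hcon
  choose u hu using hcon
  haveI : ∀ n, CompleteSpace (K n) := fun n => (hclosed n).completeSpace_coe
  have hortho : OrthogonalFamily ℂ (fun n => K n) (fun n => (K n).subtypeₗᵢ) := by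
    intro m n hmn x y
    exact horth m n hmn x x.2 y y.2
  have hsum : IsHilbertSum ℂ (fun n => K n) (fun n => (K n).subtypeₗᵢ) :=
    IsHilbertSum.mkInternal _ hortho (by rw [hdense])
  set e : H ≃ₗᵢ[ℂ] lp (fun n => (K n : Type _)) 2 := hsum.linearIsometryEquiv with he_def
  have he : ∀ (m : ℕ) (x : K m), e (x : H) = lp.single 2 m x := by
    intro m x
    have h1 : e.symm (lp.single 2 m x) = (x : H) :=
      hsum.linearIsometryEquiv_symm_apply_single x
    rw [← h1, e.apply_symm_apply]
  set g : (∀ n, (K n) ≃ₗᵢ[ℂ] (K n)) → (H ≃ₗᵢ[ℂ] H) :=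
    fun w => (e.trans (lpCongr w)).trans e.symm with hg_def
  have hgapply : ∀ (w : ∀ n, (K n) ≃ₗᵢ[ℂ] (K n)) (m : ℕ) (x : K m),
      g w (x : H) = ((w m x : K m) : H) := by
    intro w m x
    show e.symm (lpCongr w (e (x : H))) = _
    rw [he m x, lpCongr_single]
    exact hsum.linearIsometryEquiv_symm_apply_single (w m x)
  -- the block-diagonal unitaries indexed by subsets of ℕ
  set gA : Set ℕ → (H ≃ₗᵢ[ℂ] H) :=
    fun A => g (fun n => if n ∈ A then u n else LinearIsometryEquiv.refl ℂ (K n)) with hgA_def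
  obtain ⟨s, hs⟩ := hsynd
  choose k hk using fun A : Set ℕ => hs (gA A)
  have hknotinj : ¬ Function.Injective k := Function.cantor_injective k
  -- main step: a pair A, B with k A = k B and an element of B \ A gives a contradiction
  have main : ∀ A B : Set ℕ, k A = k B → ∀ n, n ∈ B → n ∉ A → False := by
    intro A B hkAB n hnB hnA
    have haA : (s (k A))⁻¹ * gA A ∈ W := by
      have := hk A
      rwa [Set.mem_smul_set_iff_inv_smul_mem, smul_eq_mul] at this
    have haB : (s (k A))⁻¹ * gA B ∈ W := by
      have := hk B
      rw [hkAB]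
      rwa [Set.mem_smul_set_iff_inv_smul_mem, smul_eq_mul] at this
    set v : H ≃ₗᵢ[ℂ] H := (gA A)⁻¹ * gA B with hv_def
    have hvW2 : v ∈ W ^ 2 := by
      have h1 : ((s (k A))⁻¹ * gA A)⁻¹ ∈ W := by
        rw [← hsym]; exact Set.inv_mem_inv.2 haA
      have h2 : ((s (k A))⁻¹ * gA A)⁻¹ * ((s (k A))⁻¹ * gA B) ∈ W * W :=
        Set.mul_mem_mul h1 haB
      have h3 : ((s (k A))⁻¹ * gA A)⁻¹ * ((s (k A))⁻¹ * gA B) = v := by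
        rw [hv_def]; group
      rwa [h3, ← sq] at h2
    -- compute the action of v on K n
    have hgB : ∀ x : K n, gA B (x : H) = ((u n x : K n) : H) := by
      intro x
      have := hgapply (fun m => if m ∈ B then u m else LinearIsometryEquiv.refl ℂ (K m)) n x
      simpa [hnB] using this
    have hgAfix : ∀ x : K n, gA A (x : H) = (x : H) := by
      intro x
      have := hgapply (fun m => if m ∈ A then u m else LinearIsometryEquiv.refl ℂ (K m)) n x
      simpa [hnA] using this
    have hgAsymm : ∀ x : K n, (gA A).symm (x : H) = (x : H) := by
      intro x
      conv_lhs => rw [← hgAfix x]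
      exact (gA A).symm_apply_apply _
    have hvx : ∀ x : K n, v (x : H) = ((u n x : K n) : H) := by
      intro x
      show (gA A)⁻¹ (gA B (x : H)) = _
      rw [hgB x, LinearIsometryEquiv.coe_inv, hgAsymm (u n x)]
    have hmap : (K n).map (v.toLinearEquiv : H →ₗ[ℂ] H) = K n := by
      apply le_antisymm
      · rintro _ ⟨y, hy, rfl⟩
        have : (v.toLinearEquiv : H →ₗ[ℂ] H) y = v y := rfl
        rw [this, hvx ⟨y, hy⟩]
        exact (u n ⟨y, hy⟩).2
      · intro y hy
        refine ⟨((u n).symm ⟨y, hy⟩ : K n), ((u n).symm ⟨y, hy⟩).2, ?_⟩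
        have : (v.toLinearEquiv : H →ₗ[ℂ] H) (((u n).symm ⟨y, hy⟩ : K n) : H)
            = v (((u n).symm ⟨y, hy⟩ : K n) : H) := rfl
        rw [this, hvx ((u n).symm ⟨y, hy⟩)]
        simp
    obtain ⟨x, hx⟩ := hu n v hvW2 hmap
    exact hx (hvx x)
  -- extract two sets with the same index
  apply hknotinj
  intro A B hAB
  by_contra hne
  have : ∃ n, (n ∈ B ∧ n ∉ A) ∨ (n ∈ A ∧ n ∉ B) := by
    by_contra h
    push_neg at h
    apply hne
    ext m
    exact ⟨(h m).2, (h m).1⟩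
  obtain ⟨n, hn | hn⟩ := this
  · exact main A B hAB n hn.1 hn.2
  · exact main B A hAB.symm n hn.1 hn.2
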